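/- Let f be a convex (or concave) continuous function on a nontrivial bounded interval [a,b] admitting a right derivative f'_r(a) at a and a left derivative f'_l(b) at b, and let ℓ_f be the affine function with ℓ_f(a) = f(a), ℓ_f(b) = f(b). Then ∫_a^b |f - ℓ_f| dμ ≤ ((b-a)²/8)·|f'_r(a) - f'_l(b)|. -/

import Mathlib

open Set intervalIntegral

lemma stmt7_aux (a b : ℝ) (hab : a < b) (f : ℝ → ℝ)
    (hcont : ContinuousOn f (Set.Icc a b))
    (hcv : ConvexOn ℝ (Set.Icc a b) f)
    (fa' fb' : ℝ)
    (ha : HasDerivWithinAt f fa' (Set.Ici a) a)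
    (hb : HasDerivWithinAt f fb' (Set.Iic b) b) :
    ∫ x in a..b, |f x - (f a + (f b - f a) / (b - a) * (x - a))|
      ≤ (b - a) ^ 2 / 8 * |fa' - fb'| := by
  have hba : (0:ℝ) < b - a := by linarith
  set s : ℝ := (f b - f a) / (b - a) with hs
  have haI : a ∈ Icc a b := ⟨le_refl a, hab.le⟩
  have hbI : b ∈ Icc a b := ⟨hab.le, le_refl b⟩
  have ha' : HasDerivWithinAt f fa' (Set.Ioi a) a := ha.mono Set.Ioi_subset_Ici_self
  have hb' : HasDerivWithinAt f fb' (Set.Iio b) b := hb.mono Set.Iio_subset_Iic_self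
  -- derivative vs slope
  have hfa_slope : ∀ y ∈ Icc a b, a < y → fa' ≤ (f y - f a) / (y - a) := by
    intro y hy hay
    have := hcv.le_slope_of_hasDerivWithinAt_Ioi haI hy hay ha'
    rwa [slope_def_field] at this
  have hslope_fb : ∀ y ∈ Icc a b, y < b → (f b - f y) / (b - y) ≤ fb' := by
    intro y hy hyb
    have := hcv.slope_le_of_hasDerivWithinAt_Iio hy hbI hyb hb'
    rwa [slope_def_field] at this
  have hfa_s : fa' ≤ s := hfa_slope b hbI hab
  have hs_fb : s ≤ fb' := by
    have := hslope_fb a haI hab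
    have : (f b - f a) / (b - a) ≤ fb' := this
    exact this
  -- f ≤ chord
  have hle : ∀ x ∈ Icc a b, f x ≤ f a + s * (x - a) := by
    intro x hx
    set t : ℝ := (x - a) / (b - a) with ht
    have ht0 : 0 ≤ t := div_nonneg (by linarith [hx.1]) hba.le
    have ht1 : t ≤ 1 := by
      rw [ht, div_le_one hba]; linarith [hx.2]
    have hxeq : x = (1 - t) * a + t * b := by
      have h1 : t * (b - a) = x - a := by rw [ht]; exact div_mul_cancel₀ _ (ne_of_gt hba)
      linarith
    have := hcv.2 haI hbI (by linarith) ht0 (by linarith : (1 - t) + t = 1)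
    simp only [smul_eq_mul] at this
    rw [← hxeq] at this
    have hst : s * (x - a) = t * (f b - f a) := by
      rw [hs, ht]; field_simp
    calc f x ≤ (1 - t) * f a + t * f b := this
      _ = f a + t * (f b - f a) := by ring
      _ = f a + s * (x - a) := by rw [hst]
  -- tangent line at a below f
  have htan_a : ∀ x ∈ Icc a b, f a + fa' * (x - a) ≤ f x := by
    intro x hx
    rcases eq_or_lt_of_le hx.1 with h | h
    · simp [← h]
    · have := hfa_slope x hx h
      have hxa : (0:ℝ) < x - a := by linarith
      rw [le_div_iff₀ hxa] at this
      linarith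
  -- tangent line at b below f
  have htan_b : ∀ x ∈ Icc a b, f b + fb' * (x - b) ≤ f x := by
    intro x hx
    rcases eq_or_lt_of_le hx.2 with h | h
    · simp [h]
    · have := hslope_fb x hx h
      have hbx : (0:ℝ) < b - x := by linarith
      rw [div_le_iff₀ hbx] at this
      nlinarith
  set g : ℝ → ℝ := fun x => |f x - (f a + s * (x - a))| with hg
  have hgeq : ∀ x ∈ Icc a b, g x = f a + s * (x - a) - f x := by
    intro x hx
    show |f x - (f a + s * (x - a))| = _
    rw [abs_of_nonpos (by linarith [hle x hx])]
    ring
  -- continuity / integrability of g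
  have hgcont : ContinuousOn g (Icc a b) := by
    apply ContinuousOn.abs
    exact hcont.sub (by fun_prop)
  set m : ℝ := (a + b) / 2 with hm
  have ham : a ≤ m := by rw [hm]; linarith
  have hmb : m ≤ b := by rw [hm]; linarith
  have hIam : Icc a m ⊆ Icc a b := Icc_subset_Icc le_rfl hmb
  have hImb : Icc m b ⊆ Icc a b := Icc_subset_Icc ham le_rfl
  have hint1 : IntervalIntegrable g MeasureTheory.volume a m :=
    (hgcont.mono hIam).intervalIntegrable_of_Icc ham
  have hint2 : IntervalIntegrable g MeasureTheory.volume m b :=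
    (hgcont.mono hImb).intervalIntegrable_of_Icc hmb
  have hsplit : ∫ x in a..b, g x = (∫ x in a..m, g x) + ∫ x in m..b, g x :=
    (integral_add_adjacent_intervals hint1 hint2).symm
  -- bound on [a, m]
  have hbound1 : (∫ x in a..m, g x) ≤ ∫ x in a..m, (s - fa') * (x - a) := by
    apply integral_mono_on ham hint1 (by apply Continuous.intervalIntegrable; fun_prop)
    intro x hx
    rw [hgeq x (hIam hx)]
    have := htan_a x (hIam hx)
    nlinarith
  have hval1 : (∫ x in a..m, (s - fa') * (x - a)) = (s - fa') * ((b - a) ^ 2 / 8) := by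
    have : (∫ x in a..m, (s - fa') * (x - a)) = (s - fa') * ∫ x in a..m, (x - a) := by
      rw [← intervalIntegral.integral_const_mul]
    rw [this]
    have h2 : (∫ x in a..m, (x - a)) = (m - a) ^ 2 / 2 := by
      have : (∫ x in a..m, (x - a)) = (∫ x in a..m, x) - (∫ x in a..m, (a:ℝ)) := by
        apply intervalIntegral.integral_sub <;> apply Continuous.intervalIntegrable <;> fun_prop
      rw [this, integral_id, intervalIntegral.integral_const]
      simp only [smul_eq_mul, hm]; ring
    rw [h2]
    have : m - a = (b - a) / 2 := by rw [hm]; ring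
    rw [this]; ring
  -- bound on [m, b]
  have hbound2 : (∫ x in m..b, g x) ≤ ∫ x in m..b, (fb' - s) * (b - x) := by
    apply integral_mono_on hmb hint2 (by apply Continuous.intervalIntegrable; fun_prop)
    intro x hx
    rw [hgeq x (hImb hx)]
    have := htan_b x (hImb hx)
    have hfb : f a + s * (b - a) = f b := by rw [hs]; field_simp; ring
    nlinarith
  have hval2 : (∫ x in m..b, (fb' - s) * (b - x)) = (fb' - s) * ((b - a) ^ 2 / 8) := by
    have : (∫ x in m..b, (fb' - s) * (b - x)) = (fb' - s) * ∫ x in m..b, (b - x) := by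
      rw [← intervalIntegral.integral_const_mul]
    rw [this]
    have h2 : (∫ x in m..b, ((b:ℝ) - x)) = (b - m) ^ 2 / 2 := by
      have : (∫ x in m..b, ((b:ℝ) - x)) = (∫ x in m..b, (b:ℝ)) - (∫ x in m..b, x) := by
        apply intervalIntegral.integral_sub <;> apply Continuous.intervalIntegrable <;> fun_prop
      rw [this, integral_id, intervalIntegral.integral_const]
      simp only [smul_eq_mul, hm]; ring
    rw [h2]
    have : b - m = (b - a) / 2 := by rw [hm]; ring
    rw [this]; ring
  have habs : |fa' - fb'| = fb' - fa' := by
    rw [abs_sub_comm, abs_of_nonneg (by linarith)]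
  calc (∫ x in a..b, g x) = (∫ x in a..m, g x) + ∫ x in m..b, g x := hsplit
    _ ≤ (s - fa') * ((b - a) ^ 2 / 8) + (fb' - s) * ((b - a) ^ 2 / 8) := by
        rw [← hval1, ← hval2]; exact add_le_add hbound1 hbound2
    _ = (b - a) ^ 2 / 8 * (fb' - fa') := by ring
    _ = (b - a) ^ 2 / 8 * |fa' - fb'| := by rw [habs]

theorem stmt7 (a b : ℝ) (hab : a < b) (f : ℝ → ℝ)
    (hcont : ContinuousOn f (Set.Icc a b))
    (hcc : ConvexOn ℝ (Set.Icc a b) f ∨ ConcaveOn ℝ (Set.Icc a b) f)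
    (fa' fb' : ℝ)
    (ha : HasDerivWithinAt f fa' (Set.Ici a) a)
    (hb : HasDerivWithinAt f fb' (Set.Iic b) b) :
    ∫ x in a..b, |f x - (f a + (f b - f a) / (b - a) * (x - a))|
      ≤ (b - a) ^ 2 / 8 * |fa' - fb'| := by
  rcases hcc with hcv | hcc
  · exact stmt7_aux a b hab f hcont hcv fa' fb' ha hb
  · have key := stmt7_aux a b hab (-f) hcont.neg hcc.neg (-fa') (-fb') ha.neg hb.neg
    have heq : ∀ x : ℝ,
        |(-f) x - ((-f) a + ((-f) b - (-f) a) / (b - a) * (x - a))|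
          = |f x - (f a + (f b - f a) / (b - a) * (x - a))| := by
      intro x
      simp only [Pi.neg_apply]
      rw [← abs_neg]
      congr 1
      ring
    have habs2 : |(-fa') - (-fb')| = |fa' - fb'| := by
      rw [← abs_neg]; congr 1; ring
    rw [habs2] at key
    calc ∫ x in a..b, |f x - (f a + (f b - f a) / (b - a) * (x - a))|
        = ∫ x in a..b, |(-f) x - ((-f) a + ((-f) b - (-f) a) / (b - a) * (x - a))| := by
          apply intervalIntegral.integral_congr; intro x _; exact (heq x).symm
      _ ≤ (b - a) ^ 2 / 8 * |fa' - fb'| := key
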